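/- All eigenvalues of the matrix J^{BR} are real and strictly less than 1. -/

import Mathlib

open Finset Matrix

/-- All eigenvalues of `J^{BR}` are real and strictly less than 1. -/
theorem JBR_eigenvalues_real_lt_one (N : ℕ) (hN : 1 ≤ N)
    (β τ lam : Fin N → ℝ)
    (hβ : ∀ n, 0 < β n) (hτ : ∀ n, 0 < τ n) (hlam : ∀ n, 0 < lam n)
    (J : Matrix (Fin N) (Fin N) ℝ)
    (hJ : ∀ i k, J i k = if i = k then β i * (lam i - τ i) / (lam i * (1 + β i))
        else -(β i * τ k / (lam i * (1 + β i)))) :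
    ∀ ξ : ℂ, ξ ∈ spectrum ℂ (J.map (algebraMap ℝ ℂ)) → ξ.im = 0 ∧ ξ.re < 1 := by
  intro ξ hξ
  haveI : NeZero N := ⟨by omega⟩
  set A := J.map (algebraMap ℝ ℂ) with hA
  -- positivity facts
  set d : Fin N → ℝ := fun i => β i / (1 + β i) with hd
  set u : Fin N → ℝ := fun i => β i / (lam i * (1 + β i)) with hu
  have h1β : ∀ i, 0 < 1 + β i := fun i => by have := hβ i; linarith
  have hdlt : ∀ i, d i < 1 := fun i => by
    rw [hd]; exact (div_lt_one (h1β i)).mpr (by linarith [hβ i])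
  have hupos : ∀ i, 0 < u i := fun i =>
    div_pos (hβ i) (mul_pos (hlam i) (h1β i))
  -- rewrite J uniformly
  have hJ' : ∀ i k, J i k = (if i = k then d i else 0) - u i * τ k := by
    intro i k
    rw [hJ]
    by_cases h : i = k
    · subst h
      simp only [if_pos rfl, eq_self_iff_true, if_true, hd, hu]
      have h1 : lam i ≠ 0 := (hlam i).ne'
      have h2 : (1 + β i) ≠ 0 := (h1β i).ne'
      field_simp
    · simp only [if_neg h, hu]; ring
  -- obtain eigenvector
  have hspec : ξ ∈ spectrum ℂ (Matrix.toLinAlgEquiv' A) := by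
    rwa [AlgEquiv.spectrum_eq]
  have hev : Module.End.HasEigenvalue (Matrix.toLinAlgEquiv' A) ξ :=
    Module.End.HasEigenvalue.of_mem_spectrum hspec
  obtain ⟨x, hx⟩ := hev.exists_hasEigenvector
  have hxne : x ≠ 0 := hx.right
  have hAx : A.mulVec x = ξ • x := by
    exact hx.apply_eq_smul
  set s : ℂ := ∑ k, (τ k : ℂ) * x k with hs
  -- key equation
  have key : ∀ i, (ξ - (d i : ℂ)) * x i = -(u i : ℂ) * s := by
    intro i
    have h1 : (A.mulVec x) i = ξ * x i := by
      rw [hAx]; simp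
    have h2 : (A.mulVec x) i = (d i : ℂ) * x i - (u i : ℂ) * s := by
      simp only [hA, Matrix.mulVec, dotProduct, Matrix.map_apply]
      have hterm : ∀ k, (algebraMap ℝ ℂ) (J i k) * x k
          = (if i = k then (d i : ℂ) else 0) * x k - (u i : ℂ) * ((τ k : ℂ) * x k) := by
        intro k
        rw [hJ' i k, show ((algebraMap ℝ ℂ) ((if i = k then d i else 0) - u i * τ k) : ℂ)
            = (((if i = k then d i else 0) - u i * τ k : ℝ) : ℂ) from rfl]
        by_cases h : i = k
        · simp only [if_pos h]; push_cast; ring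
        · simp only [if_neg h]; push_cast; ring
      rw [Finset.sum_congr rfl fun k _ => hterm k, Finset.sum_sub_distrib]
      rw [← Finset.mul_sum, ← hs]
      congr 1
      simp [ite_mul]
    rw [h1] at h2
    linear_combination h2
  by_cases hs0 : s = 0
  · -- ξ equals some d i
    obtain ⟨i, hi⟩ := Function.ne_iff.mp hxne
    have := key i
    rw [hs0, mul_zero] at this
    have hξd : ξ = (d i : ℂ) := by
      rcases mul_eq_zero.mp this with h | h
      · exact sub_eq_zero.mp h
      · exact absurd h hi
    constructor
    · rw [hξd]; exact Complex.ofReal_im _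
    · rw [hξd, Complex.ofReal_re]; exact hdlt i
  · -- ξ differs from all d i
    have hne : ∀ i, ξ - (d i : ℂ) ≠ 0 := by
      intro i h
      have := key i
      rw [h, zero_mul] at this
      have hu0 : (u i : ℂ) ≠ 0 := Complex.ofReal_ne_zero.mpr (hupos i).ne'
      rcases mul_eq_zero.mp this.symm with h' | h'
      · exact hu0 (by simpa using h')
      · exact hs0 h'
    have xval : ∀ i, x i = -(u i : ℂ) * s / (ξ - (d i : ℂ)) := by
      intro i
      rw [eq_div_iff (hne i)]
      linear_combination key i
    -- sum equation
    set T : ℂ := ∑ i, ((τ i * u i : ℝ) : ℂ) / (ξ - (d i : ℂ)) with hT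
    have hsumT : T = -1 := by
      have h1 : s = -s * T := by
        rw [hT, Finset.mul_sum, hs]
        refine Finset.sum_congr rfl fun i _ => ?_
        rw [xval i]
        push_cast
        field_simp
        ring
      have h2 : s * (T + 1) = 0 := by linear_combination h1
      rcases mul_eq_zero.mp h2 with h | h
      · exact absurd h hs0
      · linear_combination h
    -- imaginary part
    have hterm_im : ∀ i, (((τ i * u i : ℝ) : ℂ) / (ξ - (d i : ℂ))).im
        = -(τ i * u i) * ξ.im / Complex.normSq (ξ - (d i : ℂ)) := by
      intro i
      rw [Complex.div_im]
      simp [Complex.sub_im]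
      ring
    have him : ξ.im * ∑ i, (τ i * u i) / Complex.normSq (ξ - (d i : ℂ)) = 0 := by
      have := congrArg Complex.im hsumT
      rw [hT, Complex.im_sum] at this
      simp only [hterm_im] at this
      rw [show ((-1 : ℂ)).im = 0 by simp] at this
      rw [Finset.mul_sum]
      rw [← neg_eq_zero, ← this]
      rw [← Finset.sum_neg_distrib]
      refine Finset.sum_congr rfl fun i _ => ?_
      ring
    have hpos : 0 < ∑ i, (τ i * u i) / Complex.normSq (ξ - (d i : ℂ)) := by
      refine Finset.sum_pos (fun i _ => ?_) ⟨⟨0, by omega⟩, Finset.mem_univ _⟩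
      exact div_pos (mul_pos (hτ i) (hupos i)) (Complex.normSq_pos.mpr (hne i))
    have him0 : ξ.im = 0 := by
      rcases mul_eq_zero.mp him with h | h
      · exact h
      · exact absurd h hpos.ne'
    refine ⟨him0, ?_⟩
    by_contra hre
    push_neg at hre
    have hξr : ξ = (ξ.re : ℂ) := Complex.ext (by simp) (by simp [him0])
    have hreal : ∀ i, ((τ i * u i : ℝ) : ℂ) / (ξ - (d i : ℂ))
        = (((τ i * u i) / (ξ.re - d i) : ℝ) : ℂ) := by
      intro i
      conv_lhs => rw [hξr]
      push_cast
      ring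
    have hsumR : (∑ i, (τ i * u i) / (ξ.re - d i)) = -1 := by
      have := hsumT
      rw [hT] at this
      simp only [hreal] at this
      rw [← Complex.ofReal_sum] at this
      exact_mod_cast this
    have hposR : 0 < ∑ i, (τ i * u i) / (ξ.re - d i) := by
      refine Finset.sum_pos (fun i _ => ?_) ⟨⟨0, by omega⟩, Finset.mem_univ _⟩
      exact div_pos (mul_pos (hτ i) (hupos i)) (by linarith [hdlt i])
    linarith
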